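/- arXiv:1610.04708 — 2 statements merged into one kernel-verified Lean document; each statement's English description precedes it below -/
import Mathlib

section
/- If H is a contraction of a connected weighted graph G, both with more than one vertex and H connected, then the spectral gaps satisfy λ(G) ≤ λ(H). -/
open Finset

lemma swap4 {V V' : Type*} [Fintype V'] [Fintype V] (f : V → V → V' → V' → ℝ) :
    ∑ x, ∑ y, ∑ a, ∑ b, f x y a b = ∑ a, ∑ b, ∑ x, ∑ y, f x y a b :=
  calc ∑ x, ∑ y, ∑ a, ∑ b, f x y a b
      = ∑ x, ∑ a, ∑ y, ∑ b, f x y a b :=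
        Finset.sum_congr rfl fun _ _ => Finset.sum_comm
    _ = ∑ a, ∑ x, ∑ y, ∑ b, f x y a b := Finset.sum_comm
    _ = ∑ a, ∑ x, ∑ b, ∑ y, f x y a b :=
        Finset.sum_congr rfl fun _ _ =>
          Finset.sum_congr rfl fun _ _ => Finset.sum_comm
    _ = ∑ a, ∑ b, ∑ x, ∑ y, f x y a b :=
        Finset.sum_congr rfl fun _ _ => Finset.sum_comm

lemma contraction_sum {V' V : Type*} [Fintype V'] [Fintype V] [DecidableEq V]
    (w' : V' → V' → ℝ) (w : V → V → ℝ) (c : V' → V)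
    (hw : ∀ x y, w x y = ∑ a, ∑ b, if c a = x ∧ c b = y then w' a b else 0)
    (φ : V → V → ℝ) :
    ∑ x, ∑ y, φ x y * w x y = ∑ a, ∑ b, φ (c a) (c b) * w' a b := by
  simp_rw [hw, Finset.mul_sum, mul_ite, mul_zero]
  rw [swap4]
  refine Finset.sum_congr rfl fun a _ => Finset.sum_congr rfl fun b _ => ?_
  simp [ite_and, Finset.sum_ite_eq]

theorem contraction_spectral_gap {V' V : Type*} [Fintype V'] [Fintype V] [DecidableEq V]
    (w' : V' → V' → ℝ) (w : V → V → ℝ)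
    (hsymm' : ∀ a b, w' a b = w' b a) (hnn' : ∀ a b, 0 ≤ w' a b)
    (hsymm : ∀ x y, w x y = w y x)
    (hconn' : ∀ a b : V', Relation.ReflTransGen (fun p q => 0 < w' p q) a b)
    (hconn : ∀ x y : V, Relation.ReflTransGen (fun p q => 0 < w p q) x y)
    (hV' : 1 < Fintype.card V') (hV : 1 < Fintype.card V)
    (c : V' → V) (hc : Function.Surjective c)
    (hw : ∀ x y, w x y = ∑ a, ∑ b, if c a = x ∧ c b = y then w' a b else 0)
    (lamG lamH : ℝ)
    (hlamG : IsGLB {R : ℝ | ∃ f : V' → ℝ, f ≠ 0 ∧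
        (∑ a, f a * (∑ b, w' a b)) = 0 ∧
        R = ((1 / 2) * ∑ a, ∑ b, (f a - f b) ^ 2 * w' a b) /
          (∑ a, (f a) ^ 2 * (∑ b, w' a b))} lamG)
    (hlamH : IsGLB {R : ℝ | ∃ f : V → ℝ, f ≠ 0 ∧
        (∑ x, f x * (∑ y, w x y)) = 0 ∧
        R = ((1 / 2) * ∑ x, ∑ y, (f x - f y) ^ 2 * w x y) /
          (∑ x, (f x) ^ 2 * (∑ y, w x y))} lamH) :
    lamG ≤ lamH := by
  refine hlamH.2 fun R hR => hlamG.1 ?_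
  obtain ⟨f, hf0, hfsum, rfl⟩ := hR
  have key := contraction_sum w' w c hw
  refine ⟨f ∘ c, ?_, ?_, ?_⟩
  · obtain ⟨x, hx⟩ := Function.ne_iff.mp hf0
    obtain ⟨a, rfl⟩ := hc x
    exact Function.ne_iff.mpr ⟨a, hx⟩
  · have h1 := key (fun x _ => f x)
    simp_rw [Finset.mul_sum] at hfsum ⊢
    simpa [Function.comp] using h1.symm.trans hfsum
  · have h1 := key (fun x y => (f x - f y) ^ 2)
    have h2 := key (fun x _ => f x ^ 2)
    simp only [Function.comp_apply]
    rw [← h1]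
    congr 1
    simp_rw [Finset.mul_sum]
    exact h2
end

section
/- Let H_1 and H_2 be Hermitian positive semidefinite matrices with null-spaces N_1 and N_2, lowest nonzero eigenvalues λ_1 and λ_2, μ = min(λ_1, λ_2), and suppose N_1 ∩ N_2 ⊊ N_2. Let θ be the angle between N_1 and N_2 ∖ N_1 (i.e., cos θ is the maximal overlap |⟨n_1|n_2⟩| over unit vectors n_1 ∈ N_1 and unit vectors n_2 ∈ N_2 orthogonal to N_1 ∩ N_2). Then the smallest nonzero eigenvalue λ(H_1 + H_2) of H_1 + H_2 satisfies μ·sin²(θ/2) ≤ λ(H_1 + H_2) ≤ ‖H_1‖·sin²(θ). -/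
open scoped InnerProductSpace ComplexOrder

lemma re_coe_sq (r : ℝ) : ((r : ℂ) ^ 2).re = r ^ 2 := by
  rw [← Complex.ofReal_pow, Complex.ofReal_re]

lemma inner_eig {n : ℕ} (A : Matrix (Fin n) (Fin n) ℂ) (lam : ℝ)
    (f : EuclideanSpace ℂ (Fin n)) (heq : Matrix.toEuclideanLin A f = (lam : ℂ) • f) :
    (⟪f, Matrix.toEuclideanLin A f⟫_ℂ).re = lam * ‖f‖ ^ 2 := by
  rw [heq, inner_smul_right, inner_self_eq_norm_sq_to_K]
  show ((lam : ℂ) * (‖f‖ : ℂ) ^ 2).re = lam * ‖f‖ ^ 2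
  rw [← Complex.ofReal_pow, ← Complex.ofReal_mul, Complex.ofReal_re]

lemma psd_inner_nonneg {n : ℕ} {A : Matrix (Fin n) (Fin n) ℂ} (hA : A.PosSemidef)
    (x : EuclideanSpace ℂ (Fin n)) :
    0 ≤ (⟪x, Matrix.toEuclideanLin A x⟫_ℂ).re := by
  have := hA.re_dotProduct_nonneg (WithLp.equiv 2 _ x)
  rw [EuclideanSpace.inner_eq_star_dotProduct, Matrix.ofLp_toEuclideanLin_apply, dotProduct_comm]
  simpa using this

lemma eig_pos {n : ℕ} {A : Matrix (Fin n) (Fin n) ℂ} (hA : A.PosSemidef) (lam : ℝ)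
    (hne : lam ≠ 0) (f : EuclideanSpace ℂ (Fin n)) (hf : f ≠ 0)
    (heq : Matrix.toEuclideanLin A f = (lam : ℂ) • f) : 0 < lam := by
  have h1 := psd_inner_nonneg hA f
  rw [inner_eig A lam f heq] at h1
  have h2 : (0:ℝ) < ‖f‖ ^ 2 := pow_pos (norm_pos_iff.mpr hf) 2
  rcases lt_trichotomy lam 0 with h | h | h
  · nlinarith
  · exact absurd h hne
  · exact h

lemma ker_sum {n : ℕ} {A B : Matrix (Fin n) (Fin n) ℂ}
    (hA : A.PosSemidef) (hB : B.PosSemidef) :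
    LinearMap.ker (Matrix.toEuclideanLin (A + B)) =
      LinearMap.ker (Matrix.toEuclideanLin A) ⊓ LinearMap.ker (Matrix.toEuclideanLin B) := by
  have hadd : Matrix.toEuclideanLin (A + B)
      = Matrix.toEuclideanLin A + Matrix.toEuclideanLin B := map_add _ _ _
  apply le_antisymm
  · intro f hf
    rw [LinearMap.mem_ker] at hf
    set x := WithLp.equiv 2 (Fin n → ℂ) f with hx
    have hABx : Matrix.mulVec A x + Matrix.mulVec B x = 0 := by
      have h0 := congrArg (WithLp.equiv 2 (Fin n → ℂ)) hf
      change Matrix.mulVec (A + B) x = WithLp.equiv 2 (Fin n → ℂ) 0 at h0; rw [Matrix.add_mulVec] at h0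
      simpa using h0
    have hdsum : dotProduct (star x) (Matrix.mulVec A x)
        + dotProduct (star x) (Matrix.mulVec B x) = 0 := by
      rw [← dotProduct_add, hABx, dotProduct_zero]
    have h1 := hA.dotProduct_mulVec_nonneg x
    have h2 := hB.dotProduct_mulVec_nonneg x
    have hA0 : dotProduct (star x) (Matrix.mulVec A x) = 0 := by
      refine le_antisymm ?_ h1
      calc dotProduct (star x) (Matrix.mulVec A x)
          ≤ dotProduct (star x) (Matrix.mulVec A x)
            + dotProduct (star x) (Matrix.mulVec B x) := le_add_of_nonneg_right h2
        _ = 0 := hdsum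
    have hB0 : dotProduct (star x) (Matrix.mulVec B x) = 0 := by
      rw [hA0, zero_add] at hdsum; exact hdsum
    have hAx : Matrix.mulVec A x = 0 := (hA.dotProduct_mulVec_zero_iff x).mp hA0
    have hBx : Matrix.mulVec B x = 0 := (hB.dotProduct_mulVec_zero_iff x).mp hB0
    rw [Submodule.mem_inf]
    constructor <;> rw [LinearMap.mem_ker, Matrix.toEuclideanLin_apply, show f.ofLp = x from rfl]
    · rw [hAx]; simp
    · rw [hBx]; simp
  · intro f hf
    rw [Submodule.mem_inf] at hf
    rw [LinearMap.mem_ker, hadd]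
    have h1 : Matrix.toEuclideanLin A f = 0 := hf.1
    have h2 : Matrix.toEuclideanLin B f = 0 := hf.2
    simp [h1, h2]

lemma rayleigh_aux {n : ℕ} (A : Matrix (Fin n) (Fin n) ℂ) (hA : A.IsHermitian)
    (lam : ℝ)
    (hlb : ∀ μ' : ℝ, μ' ≠ 0 → (∃ f : EuclideanSpace ℂ (Fin n), f ≠ 0 ∧
        Matrix.toEuclideanLin A f = (μ' : ℂ) • f) → lam ≤ μ')
    (g : EuclideanSpace ℂ (Fin n)) (hg : g ∈ (LinearMap.ker (Matrix.toEuclideanLin A))ᗮ) :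
    lam * ‖g‖ ^ 2 ≤ (⟪g, Matrix.toEuclideanLin A g⟫_ℂ).re := by
  set T := Matrix.toEuclideanLin A with hT
  have hS : T.IsSymmetric := Matrix.isHermitian_iff_isSymmetric.mp hA
  have hn : Module.finrank ℂ (EuclideanSpace ℂ (Fin n)) = n := finrank_euclideanSpace_fin
  have hinner : (⟪g, T g⟫_ℂ).re
      = ∑ i, hS.eigenvalues hn i * ‖(hS.eigenvectorBasis hn).repr g i‖ ^ 2 := by
    have h1 : ⟪g, T g⟫_ℂ = ⟪(hS.eigenvectorBasis hn).repr g,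
        (hS.eigenvectorBasis hn).repr (T g)⟫_ℂ :=
      ((hS.eigenvectorBasis hn).repr.inner_map_map g (T g)).symm
    rw [h1, PiLp.inner_apply, Complex.re_sum]
    congr 1; funext i
    rw [hS.eigenvectorBasis_apply_self_apply hn g i]
    simp only [RCLike.inner_apply]
    set z := (hS.eigenvectorBasis hn).repr g i with hz
    show ((hS.eigenvalues hn i : ℂ) * z * (starRingEnd ℂ) z).re
        = hS.eigenvalues hn i * ‖z‖ ^ 2
    have h2 : (hS.eigenvalues hn i : ℂ) * z * (starRingEnd ℂ) z
        = (hS.eigenvalues hn i : ℂ) * ((starRingEnd ℂ) z * z) := by ring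
    rw [h2, Complex.conj_mul', ← Complex.ofReal_pow, ← Complex.ofReal_mul,
      Complex.ofReal_re]
  have hnorm : ‖g‖ ^ 2 = ∑ i, ‖(hS.eigenvectorBasis hn).repr g i‖ ^ 2 := by
    have h3 := (hS.eigenvectorBasis hn).repr.norm_map g
    rw [← h3, EuclideanSpace.norm_eq, Real.sq_sqrt (by positivity)]
  have key : ∀ i, lam * ‖(hS.eigenvectorBasis hn).repr g i‖ ^ 2
      ≤ hS.eigenvalues hn i * ‖(hS.eigenvectorBasis hn).repr g i‖ ^ 2 := by
    intro i
    by_cases h0 : hS.eigenvalues hn i = 0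
    · have hker : hS.eigenvectorBasis hn i ∈ LinearMap.ker T := by
        rw [LinearMap.mem_ker]
        have h4 := hS.apply_eigenvectorBasis hn i
        rw [h0] at h4; simpa using h4
      have h5 : (hS.eigenvectorBasis hn).repr g i = 0 := by
        have := (Submodule.mem_orthogonal _ g).mp hg _ hker
        simpa [(hS.eigenvectorBasis hn).repr_apply_apply] using this
      simp [h5, h0]
    · have hle : lam ≤ hS.eigenvalues hn i := by
        refine hlb _ h0 ⟨hS.eigenvectorBasis hn i, ?_, hS.apply_eigenvectorBasis hn i⟩
        intro hz
        have := (hS.eigenvectorBasis hn).orthonormal.1 i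
        rw [hz] at this; simp at this
      exact mul_le_mul_of_nonneg_right hle (by positivity)
  calc lam * ‖g‖ ^ 2 = ∑ i, lam * ‖(hS.eigenvectorBasis hn).repr g i‖ ^ 2 := by
        rw [hnorm, Finset.mul_sum]
    _ ≤ _ := Finset.sum_le_sum fun i _ => key i
    _ = (⟪g, T g⟫_ℂ).re := hinner.symm

lemma proj_decomp {n : ℕ} (K : Submodule ℂ (EuclideanSpace ℂ (Fin n)))
    (f : EuclideanSpace ℂ (Fin n)) :
    ∃ g w : EuclideanSpace ℂ (Fin n), g ∈ K ∧ w ∈ Kᗮ ∧ f = g + w ∧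
      ‖f‖ ^ 2 = ‖g‖ ^ 2 + ‖w‖ ^ 2 ∧ (⟪f, g⟫_ℂ).re = ‖g‖ ^ 2 := by
  refine ⟨K.orthogonalProjection f, f - K.orthogonalProjection f, SetLike.coe_mem _,
    Submodule.sub_starProjection_mem_orthogonal f, by abel, ?_, ?_⟩
  · have hortho : ⟪(K.orthogonalProjection f : EuclideanSpace ℂ (Fin n)),
        f - K.orthogonalProjection f⟫_ℂ = 0 :=
      (Submodule.mem_orthogonal _ _).mp (Submodule.sub_starProjection_mem_orthogonal f) _
        (SetLike.coe_mem _)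
    have := @norm_add_sq ℂ _ _ _ _ (K.orthogonalProjection f : EuclideanSpace ℂ (Fin n))
      (f - K.orthogonalProjection f)
    rw [hortho] at this
    simpa using this
  · have hortho : ⟪(K.orthogonalProjection f : EuclideanSpace ℂ (Fin n)),
        f - K.orthogonalProjection f⟫_ℂ = 0 :=
      (Submodule.mem_orthogonal _ _).mp (Submodule.sub_starProjection_mem_orthogonal f) _
        (SetLike.coe_mem _)
    have hd : f = (K.orthogonalProjection f : EuclideanSpace ℂ (Fin n))
        + (f - K.orthogonalProjection f) := by abel
    rw [show (⟪f, (K.orthogonalProjection f : EuclideanSpace ℂ (Fin n))⟫_ℂ)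
        = ⟪(K.orthogonalProjection f : EuclideanSpace ℂ (Fin n))
            + (f - K.orthogonalProjection f),
          (K.orthogonalProjection f : EuclideanSpace ℂ (Fin n))⟫_ℂ from by rw [← hd]]
    rw [inner_add_left]
    have h2 : ⟪f - (K.orthogonalProjection f : EuclideanSpace ℂ (Fin n)),
        (K.orthogonalProjection f : EuclideanSpace ℂ (Fin n))⟫_ℂ = 0 := by
      rw [← inner_conj_symm, hortho]; simp
    rw [h2, add_zero, inner_self_eq_norm_sq_to_K]
    exact re_coe_sq _

lemma inner_shift {n : ℕ} (A : Matrix (Fin n) (Fin n) ℂ)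
    (hS : (Matrix.toEuclideanLin A).IsSymmetric)
    (f g w : EuclideanSpace ℂ (Fin n)) (hd : f = g + w)
    (hg : Matrix.toEuclideanLin A g = 0) :
    ⟪f, Matrix.toEuclideanLin A f⟫_ℂ = ⟪w, Matrix.toEuclideanLin A w⟫_ℂ := by
  have hTf : Matrix.toEuclideanLin A f = Matrix.toEuclideanLin A w := by
    rw [hd, map_add, hg, zero_add]
  rw [hTf, hd, inner_add_left]
  have h0 : ⟪g, Matrix.toEuclideanLin A w⟫_ℂ = 0 := by
    rw [← hS g w, hg, inner_zero_left]
  rw [h0, zero_add]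
set_option maxHeartbeats 2000000 in
theorem kitaev_angle_lemma {n : ℕ}
    (H1 H2 : Matrix (Fin n) (Fin n) ℂ)
    (h1 : H1.PosSemidef) (h2 : H2.PosSemidef)
    (N1 N2 : Submodule ℂ (EuclideanSpace ℂ (Fin n)))
    (hN1 : N1 = LinearMap.ker (Matrix.toEuclideanLin H1))
    (hN2 : N2 = LinearMap.ker (Matrix.toEuclideanLin H2))
    (hN1ne : N1 ≠ ⊥) (hN2ne : N2 ≠ ⊥)
    (hproper : N1 ⊓ N2 < N2)
    (lam1 lam2 : ℝ)
    (hlam1 : IsLeast {μ : ℝ | μ ≠ 0 ∧ ∃ f : EuclideanSpace ℂ (Fin n), f ≠ 0 ∧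
        Matrix.toEuclideanLin H1 f = (μ : ℂ) • f} lam1)
    (hlam2 : IsLeast {μ : ℝ | μ ≠ 0 ∧ ∃ f : EuclideanSpace ℂ (Fin n), f ≠ 0 ∧
        Matrix.toEuclideanLin H2 f = (μ : ℂ) • f} lam2)
    (μ : ℝ) (hμ : μ = min lam1 lam2)
    (θ : ℝ) (hθ0 : 0 ≤ θ) (hθ1 : θ ≤ Real.pi / 2)
    (hcos : IsGreatest {r : ℝ | ∃ u v : EuclideanSpace ℂ (Fin n),
        u ∈ N1 ∧ v ∈ N2 ∧ v ∈ (N1 ⊓ N2)ᗮ ∧ ‖u‖ = 1 ∧ ‖v‖ = 1 ∧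
        r = ‖(⟪u, v⟫_ℂ : ℂ)‖} (Real.cos θ))
    (lamSum : ℝ)
    (hlamSum : IsLeast {ν : ℝ | ν ≠ 0 ∧ ∃ f : EuclideanSpace ℂ (Fin n), f ≠ 0 ∧
        Matrix.toEuclideanLin (H1 + H2) f = (ν : ℂ) • f} lamSum) :
    μ * Real.sin (θ / 2) ^ 2 ≤ lamSum ∧
      lamSum ≤ ‖LinearMap.toContinuousLinearMap (Matrix.toEuclideanLin H1)‖ *
        Real.sin θ ^ 2 := by
  have h12 : (H1 + H2).PosSemidef := h1.add h2
  have hS1 : (Matrix.toEuclideanLin H1).IsSymmetric :=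
    Matrix.isHermitian_iff_isSymmetric.mp h1.isHermitian
  have hS2 : (Matrix.toEuclideanLin H2).IsSymmetric :=
    Matrix.isHermitian_iff_isSymmetric.mp h2.isHermitian
  have hS12 : (Matrix.toEuclideanLin (H1 + H2)).IsSymmetric :=
    Matrix.isHermitian_iff_isSymmetric.mp h12.isHermitian
  have hadd : Matrix.toEuclideanLin (H1 + H2)
      = Matrix.toEuclideanLin H1 + Matrix.toEuclideanLin H2 := map_add _ _ _
  have hker12 : LinearMap.ker (Matrix.toEuclideanLin (H1 + H2)) = N1 ⊓ N2 := by
    rw [hN1, hN2]; exact ker_sum h1 h2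
  obtain ⟨u₀, v₀, hu₀N, hv₀N, hv₀O, hu₀n, hv₀n, hval⟩ := hcos.1
  have hc0 : 0 ≤ Real.cos θ := hval ▸ norm_nonneg _
  obtain ⟨hl1ne, f1, hf1ne, hf1eq⟩ := hlam1.1
  obtain ⟨hl2ne, f2, hf2ne, hf2eq⟩ := hlam2.1
  obtain ⟨hsne, f0, hf0ne, hf0eq⟩ := hlamSum.1
  have hl1pos : 0 < lam1 := eig_pos h1 lam1 hl1ne f1 hf1ne hf1eq
  have hl2pos : 0 < lam2 := eig_pos h2 lam2 hl2ne f2 hf2ne hf2eq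
  have hμpos : 0 < μ := by rw [hμ]; exact lt_min hl1pos hl2pos
  have hμ1 : μ ≤ lam1 := hμ ▸ min_le_left _ _
  have hμ2 : μ ≤ lam2 := hμ ▸ min_le_right _ _
  have htrig : 2 * Real.sin (θ / 2) ^ 2 = 1 - Real.cos θ := by
    have hcq := Real.cos_sq (θ / 2)
    have hsq := Real.sin_sq_add_cos_sq (θ / 2)
    rw [show 2 * (θ / 2) = θ by ring] at hcq
    nlinarith
  constructor
  · -- LOWER BOUND
    set f : EuclideanSpace ℂ (Fin n) := ((‖f0‖⁻¹ : ℝ) : ℂ) • f0 with hf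
    have hf0n : ‖f0‖ ≠ 0 := norm_ne_zero_iff.mpr hf0ne
    have hfn : ‖f‖ = 1 := by
      rw [hf, norm_smul]
      simp [abs_of_nonneg (inv_nonneg.mpr (norm_nonneg f0)), inv_mul_cancel₀ hf0n]
    have hfeq : Matrix.toEuclideanLin (H1 + H2) f = (lamSum : ℂ) • f := by
      rw [hf, map_smul, hf0eq, smul_comm]
    have hforth : f ∈ (LinearMap.ker (Matrix.toEuclideanLin (H1 + H2)))ᗮ := by
      rw [Submodule.mem_orthogonal]
      intro w hw
      have h3 : ⟪w, Matrix.toEuclideanLin (H1 + H2) f⟫_ℂ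
          = ⟪Matrix.toEuclideanLin (H1 + H2) w, f⟫_ℂ := (hS12 w f).symm
      rw [LinearMap.mem_ker.mp hw, inner_zero_left, hfeq, inner_smul_right] at h3
      have hlc : (lamSum : ℂ) ≠ 0 := Complex.ofReal_ne_zero.mpr hsne
      exact (mul_eq_zero.mp h3).resolve_left hlc
    have hfC : f ∈ (N1 ⊓ N2)ᗮ := hker12 ▸ hforth
    obtain ⟨g1, w1, hg1N, hw1O, hd1, hpy1, hre1⟩ := proj_decomp N1 f
    obtain ⟨g2, w2, hg2N, hw2O, hd2, hpy2, hre2⟩ := proj_decomp N2 f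
    rw [hfn, one_pow] at hpy1 hpy2
    -- g2 ⊥ N1 ⊓ N2
    have hg2C : g2 ∈ (N1 ⊓ N2)ᗮ := by
      rw [Submodule.mem_orthogonal]
      intro w hw
      have hwf : ⟪w, f⟫_ℂ = 0 := (Submodule.mem_orthogonal _ _).mp hfC w hw
      have hww2 : ⟪w, w2⟫_ℂ = 0 := (Submodule.mem_orthogonal _ _).mp hw2O w hw.2
      have h4 : ⟪w, f⟫_ℂ = ⟪w, g2⟫_ℂ + ⟪w, w2⟫_ℂ := by rw [hd2, inner_add_right]
      rw [hwf, hww2, add_zero] at h4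
      exact h4.symm
    -- inner product bound between g1 and g2
    have hip : ‖(⟪g1, g2⟫_ℂ)‖ ≤ Real.cos θ * ‖g1‖ * ‖g2‖ := by
      by_cases hg1z : g1 = 0
      · simp only [hg1z, inner_zero_left, norm_zero, norm_zero]
        simp [mul_nonneg (mul_nonneg hc0 (norm_nonneg _)) (norm_nonneg _)]
      by_cases hg2z : g2 = 0
      · simp only [hg2z, inner_zero_right, norm_zero, norm_zero]
        simp [mul_nonneg (mul_nonneg hc0 (norm_nonneg _)) (norm_nonneg _)]
      have ha : (0:ℝ) < ‖g1‖ := norm_pos_iff.mpr hg1z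
      have hb : (0:ℝ) < ‖g2‖ := norm_pos_iff.mpr hg2z
      set u : EuclideanSpace ℂ (Fin n) := ((‖g1‖⁻¹ : ℝ) : ℂ) • g1 with hu
      set v : EuclideanSpace ℂ (Fin n) := ((‖g2‖⁻¹ : ℝ) : ℂ) • g2 with hv
      have hun : ‖u‖ = 1 := by
        rw [hu, norm_smul]
        simp [abs_of_nonneg (inv_nonneg.mpr (norm_nonneg g1)), inv_mul_cancel₀ ha.ne']
      have hvn : ‖v‖ = 1 := by
        rw [hv, norm_smul]
        simp [abs_of_nonneg (inv_nonneg.mpr (norm_nonneg g2)), inv_mul_cancel₀ hb.ne']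
      have humem : u ∈ N1 := N1.smul_mem _ hg1N
      have hvmem : v ∈ N2 := N2.smul_mem _ hg2N
      have hvC : v ∈ (N1 ⊓ N2)ᗮ := Submodule.smul_mem _ _ hg2C
      have hle := hcos.2 ⟨u, v, humem, hvmem, hvC, hun, hvn, rfl⟩
      have huv : ‖(⟪u, v⟫_ℂ)‖ = ‖g1‖⁻¹ * ‖g2‖⁻¹ * ‖(⟪g1, g2⟫_ℂ)‖ := by
        rw [hu, hv, inner_smul_left, inner_smul_right, norm_mul, norm_mul]
        simp [abs_of_nonneg (inv_nonneg.mpr (norm_nonneg g1)),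
          abs_of_nonneg (inv_nonneg.mpr (norm_nonneg g2))]
        ring
      rw [huv] at hle
      calc ‖(⟪g1, g2⟫_ℂ)‖
          = (‖g1‖ * ‖g2‖) * (‖g1‖⁻¹ * ‖g2‖⁻¹ * ‖(⟪g1, g2⟫_ℂ)‖) := by
            field_simp
        _ ≤ (‖g1‖ * ‖g2‖) * Real.cos θ :=
            mul_le_mul_of_nonneg_left hle (by positivity)
        _ = Real.cos θ * ‖g1‖ * ‖g2‖ := by ring
    have hRe : (⟪g1, g2⟫_ℂ).re ≤ Real.cos θ * ‖g1‖ * ‖g2‖ := by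
      calc (⟪g1, g2⟫_ℂ).re ≤ ‖(⟪g1, g2⟫_ℂ)‖ := Complex.re_le_norm _
        _ = ‖(⟪g1, g2⟫_ℂ)‖ := rfl
        _ ≤ _ := hip
    -- s ≤ 1 + cos θ
    have hfg : ‖g1‖ ^ 2 + ‖g2‖ ^ 2 ≤ ‖g1 + g2‖ := by
      have h4 : (⟪f, g1 + g2⟫_ℂ).re = ‖g1‖ ^ 2 + ‖g2‖ ^ 2 := by
        rw [inner_add_right, Complex.add_re, hre1, hre2]
      have h5 : (⟪f, g1 + g2⟫_ℂ).re ≤ ‖g1 + g2‖ := by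
        calc (⟪f, g1 + g2⟫_ℂ).re ≤ ‖(⟪f, g1 + g2⟫_ℂ)‖ := Complex.re_le_norm _
          _ = ‖(⟪f, g1 + g2⟫_ℂ)‖ := rfl
          _ ≤ ‖f‖ * ‖g1 + g2‖ := norm_inner_le_norm _ _
          _ = ‖g1 + g2‖ := by rw [hfn, one_mul]
      linarith
    have hns : ‖g1 + g2‖ ^ 2 ≤ ‖g1‖ ^ 2 + 2 * (Real.cos θ * ‖g1‖ * ‖g2‖) + ‖g2‖ ^ 2 := by
      have h6 := @norm_add_sq ℂ _ _ _ _ g1 g2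
      have h7 : RCLike.re (⟪g1, g2⟫_ℂ) = (⟪g1, g2⟫_ℂ).re := rfl
      rw [h7] at h6
      nlinarith
    have hsum : ‖g1‖ ^ 2 + ‖g2‖ ^ 2 ≤ 1 + Real.cos θ := by
      nlinarith [norm_nonneg g1, norm_nonneg g2, norm_nonneg (g1 + g2),
        sq_nonneg (‖g1‖ - ‖g2‖), sq_nonneg (‖g1‖ ^ 2 + ‖g2‖ ^ 2)]
    -- Rayleigh bounds
    have hray1 : lam1 * ‖w1‖ ^ 2 ≤ (⟪w1, Matrix.toEuclideanLin H1 w1⟫_ℂ).re :=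
      rayleigh_aux H1 h1.isHermitian lam1 (fun μ' hne hex => hlam1.2 ⟨hne, hex⟩) w1
        (by rw [← hN1]; exact hw1O)
    have hray2 : lam2 * ‖w2‖ ^ 2 ≤ (⟪w2, Matrix.toEuclideanLin H2 w2⟫_ℂ).re :=
      rayleigh_aux H2 h2.isHermitian lam2 (fun μ' hne hex => hlam2.2 ⟨hne, hex⟩) w2
        (by rw [← hN2]; exact hw2O)
    have hg1k : Matrix.toEuclideanLin H1 g1 = 0 := LinearMap.mem_ker.mp (hN1 ▸ hg1N)
    have hg2k : Matrix.toEuclideanLin H2 g2 = 0 := LinearMap.mem_ker.mp (hN2 ▸ hg2N)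
    have heq1 : (⟪f, Matrix.toEuclideanLin H1 f⟫_ℂ).re
        = (⟪w1, Matrix.toEuclideanLin H1 w1⟫_ℂ).re := by
      rw [inner_shift H1 hS1 f g1 w1 hd1 hg1k]
    have heq2 : (⟪f, Matrix.toEuclideanLin H2 f⟫_ℂ).re
        = (⟪w2, Matrix.toEuclideanLin H2 w2⟫_ℂ).re := by
      rw [inner_shift H2 hS2 f g2 w2 hd2 hg2k]
    have hlamSum_eq : lamSum = (⟪f, Matrix.toEuclideanLin (H1 + H2) f⟫_ℂ).re := by
      rw [inner_eig _ _ _ hfeq, hfn]; ring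
    have hsplit : (⟪f, Matrix.toEuclideanLin (H1 + H2) f⟫_ℂ).re
        = (⟪f, Matrix.toEuclideanLin H1 f⟫_ℂ).re
          + (⟪f, Matrix.toEuclideanLin H2 f⟫_ℂ).re := by
      rw [hadd, LinearMap.add_apply, inner_add_right, Complex.add_re]
    have e1 : lam1 * ‖w1‖ ^ 2 ≤ (⟪f, Matrix.toEuclideanLin H1 f⟫_ℂ).re := heq1 ▸ hray1
    have e2 : lam2 * ‖w2‖ ^ 2 ≤ (⟪f, Matrix.toEuclideanLin H2 f⟫_ℂ).re := heq2 ▸ hray2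
    have m1 : μ * ‖w1‖ ^ 2 ≤ lam1 * ‖w1‖ ^ 2 :=
      mul_le_mul_of_nonneg_right hμ1 (sq_nonneg _)
    have m2 : μ * ‖w2‖ ^ 2 ≤ lam2 * ‖w2‖ ^ 2 :=
      mul_le_mul_of_nonneg_right hμ2 (sq_nonneg _)
    have hfinal : μ * (1 + Real.cos θ - (‖g1‖ ^ 2 + ‖g2‖ ^ 2)) ≥ 0 :=
      mul_nonneg hμpos.le (by linarith)
    nlinarith [sq_nonneg (Real.sin (θ / 2)), hμpos]
  · -- UPPER BOUND
    have hv₀orth : v₀ ∈ (LinearMap.ker (Matrix.toEuclideanLin (H1 + H2)))ᗮ := by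
      rw [hker12]; exact hv₀O
    have hrayS : lamSum * ‖v₀‖ ^ 2 ≤ (⟪v₀, Matrix.toEuclideanLin (H1 + H2) v₀⟫_ℂ).re :=
      rayleigh_aux (H1 + H2) h12.isHermitian lamSum
        (fun μ' hne hex => hlamSum.2 ⟨hne, hex⟩) v₀ hv₀orth
    rw [hv₀n, one_pow, mul_one] at hrayS
    have hT2v : Matrix.toEuclideanLin H2 v₀ = 0 := LinearMap.mem_ker.mp (hN2 ▸ hv₀N)
    have hsplit2 : (⟪v₀, Matrix.toEuclideanLin (H1 + H2) v₀⟫_ℂ).re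
        = (⟪v₀, Matrix.toEuclideanLin H1 v₀⟫_ℂ).re := by
      rw [hadd, LinearMap.add_apply, hT2v, add_zero]
    obtain ⟨g, w, hgN, hwO, hd, hpy, _⟩ := proj_decomp N1 v₀
    rw [hv₀n, one_pow] at hpy
    have hcg : Real.cos θ ≤ ‖g‖ := by
      have h8 : ⟪u₀, v₀⟫_ℂ = ⟪u₀, g⟫_ℂ := by
        rw [hd, inner_add_right, (Submodule.mem_orthogonal _ _).mp hwO u₀ hu₀N, add_zero]
      calc Real.cos θ = ‖(⟪u₀, v₀⟫_ℂ)‖ := hval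
        _ = ‖(⟪u₀, g⟫_ℂ)‖ := by rw [h8]
        _ ≤ ‖u₀‖ * ‖g‖ := norm_inner_le_norm _ _
        _ = ‖g‖ := by rw [hu₀n, one_mul]
    have hgk : Matrix.toEuclideanLin H1 g = 0 := LinearMap.mem_ker.mp (hN1 ▸ hgN)
    have heqv : (⟪v₀, Matrix.toEuclideanLin H1 v₀⟫_ℂ).re
        = (⟪w, Matrix.toEuclideanLin H1 w⟫_ℂ).re := by
      rw [inner_shift H1 hS1 v₀ g w hd hgk]
    set C := LinearMap.toContinuousLinearMap (Matrix.toEuclideanLin H1) with hC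
    have hCnn : (0:ℝ) ≤ ‖C‖ := norm_nonneg _
    have hbound : (⟪w, Matrix.toEuclideanLin H1 w⟫_ℂ).re ≤ ‖C‖ * ‖w‖ ^ 2 := by
      calc (⟪w, Matrix.toEuclideanLin H1 w⟫_ℂ).re
          ≤ ‖(⟪w, Matrix.toEuclideanLin H1 w⟫_ℂ)‖ := Complex.re_le_norm _
        _ = ‖(⟪w, Matrix.toEuclideanLin H1 w⟫_ℂ)‖ := rfl
        _ ≤ ‖w‖ * ‖Matrix.toEuclideanLin H1 w‖ := norm_inner_le_norm _ _
        _ = ‖w‖ * ‖C w‖ := rfl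
        _ ≤ ‖w‖ * (‖C‖ * ‖w‖) := mul_le_mul_of_nonneg_left (C.le_opNorm w) (norm_nonneg _)
        _ = ‖C‖ * ‖w‖ ^ 2 := by ring
    have hwsq : ‖w‖ ^ 2 ≤ Real.sin θ ^ 2 := by
      have hsin : Real.sin θ ^ 2 = 1 - Real.cos θ ^ 2 := Real.sin_sq θ
      nlinarith
    calc lamSum ≤ (⟪w, Matrix.toEuclideanLin H1 w⟫_ℂ).re := by
          rw [← heqv, ← hsplit2]; exact hrayS
      _ ≤ ‖C‖ * ‖w‖ ^ 2 := hbound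
      _ ≤ ‖C‖ * Real.sin θ ^ 2 := mul_le_mul_of_nonneg_left hwsq hCnn
end
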